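/- Q is affine in each variable: for f₁, f₂, g ∈ G and x ∈ [0,1], Q(x f₁ + (1-x) f₂, g) = x Q(f₁,g) + (1-x) Q(f₂,g), and similarly Q(f, x g₁ + (1-x) g₂) = x Q(f,g₁) + (1-x) Q(f,g₂) for g₁, g₂ ∈ G. -/

import Mathlib

/-- An orientation-preserving homeomorphism of `[-1,1]`. -/
def IsHPM (f : ℝ → ℝ) : Prop :=
  ContinuousOn f (Set.Icc (-1) 1) ∧ StrictMonoOn f (Set.Icc (-1) 1) ∧
    Set.MapsTo f (Set.Icc (-1) 1) (Set.Icc (-1) 1) ∧ f (-1) = -1 ∧ f 1 = 1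

open Set MeasureTheory

/-- clamp to `[-1,1]` -/
noncomputable def clampI (t : ℝ) : ℝ := max (-1) (min 1 t)

lemma clampI_mono : Monotone clampI :=
  monotone_const.max (monotone_const.min monotone_id)

lemma clampI_mem (t : ℝ) : clampI t ∈ Set.Icc (-1:ℝ) 1 :=
  ⟨le_max_left _ _, max_le (by norm_num) (min_le_left _ _)⟩

lemma clampI_eq {t : ℝ} (h : t ∈ Set.Icc (-1:ℝ) 1) : clampI t = t := by
  unfold clampI
  rw [min_eq_right h.2, max_eq_right h.1]

/-- the inverse of a strictly monotone function is strictly monotone -/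
lemma invStrictMono {h hinv : ℝ → ℝ}
    (hm : StrictMonoOn h (Set.Icc (-1:ℝ) 1))
    (hmaps : Set.MapsTo hinv (Set.Icc (-1:ℝ) 1) (Set.Icc (-1:ℝ) 1))
    (hi : ∀ t ∈ Set.Icc (-1:ℝ) 1, h (hinv t) = t) :
    StrictMonoOn hinv (Set.Icc (-1:ℝ) 1) := by
  intro a ha b hb hab
  by_contra hle
  push_neg at hle
  have := hm.monotoneOn (hmaps hb) (hmaps ha) hle
  rw [hi a ha, hi b hb] at this
  linarith

/-- Key lemma: `∫ f ∘ hinv = - ∫ h ∘ finv` over `[-1,1]`. -/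
lemma key_identity (f h finv hinv : ℝ → ℝ)
    (hfm : StrictMonoOn f (Set.Icc (-1:ℝ) 1))
    (hfmaps : Set.MapsTo f (Set.Icc (-1:ℝ) 1) (Set.Icc (-1:ℝ) 1))
    (hhm : StrictMonoOn h (Set.Icc (-1:ℝ) 1))
    (hhmaps : Set.MapsTo h (Set.Icc (-1:ℝ) 1) (Set.Icc (-1:ℝ) 1))
    (hfi : ∀ t ∈ Set.Icc (-1:ℝ) 1, f (finv t) = t)
    (hhi : ∀ t ∈ Set.Icc (-1:ℝ) 1, h (hinv t) = t)
    (hfinvmaps : Set.MapsTo finv (Set.Icc (-1:ℝ) 1) (Set.Icc (-1:ℝ) 1))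
    (hhinvmaps : Set.MapsTo hinv (Set.Icc (-1:ℝ) 1) (Set.Icc (-1:ℝ) 1)) :
    ∫ t in Set.Icc (-1:ℝ) 1, f (hinv t) = - ∫ s in Set.Icc (-1:ℝ) 1, h (finv s) := by
  set I : Set ℝ := Set.Icc (-1:ℝ) 1 with hI
  have hIm : MeasurableSet I := measurableSet_Icc
  set G : ℝ → ℝ := fun t => f (hinv (clampI t)) with hG
  set H : ℝ → ℝ := fun s => h (finv (clampI s)) with hH
  have hinvmono : StrictMonoOn hinv I := invStrictMono hhm hhinvmaps hhi
  have finvmono : StrictMonoOn finv I := invStrictMono hfm hfinvmaps hfi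
  have hGmono : Monotone G := fun a b hab =>
    hfm.monotoneOn (hhinvmaps (clampI_mem a)) (hhinvmaps (clampI_mem b))
      (hinvmono.monotoneOn (clampI_mem a) (clampI_mem b) (clampI_mono hab))
  have hHmono : Monotone H := fun a b hab =>
    hhm.monotoneOn (hfinvmaps (clampI_mem a)) (hfinvmaps (clampI_mem b))
      (finvmono.monotoneOn (clampI_mem a) (clampI_mem b) (clampI_mono hab))
  have hGmem : ∀ t, G t ∈ I := fun t => hfmaps (hhinvmaps (clampI_mem t))
  have hHmem : ∀ t, H t ∈ I := fun t => hhmaps (hfinvmaps (clampI_mem t))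
  -- equivalence of descriptions
  have hequiv : ∀ t ∈ I, ∀ s ∈ I, (s < G t ↔ H s < t) := by
    intro t ht s hs
    have e1 : G t = f (hinv t) := by rw [hG]; simp [clampI_eq ht]
    have e2 : H s = h (finv s) := by rw [hH]; simp [clampI_eq hs]
    rw [e1, e2]
    constructor
    · intro hlt
      have h1 : f (finv s) < f (hinv t) := by rwa [hfi s hs]
      have h2 : finv s < hinv t := (hfm.lt_iff_lt (hfinvmaps hs) (hhinvmaps ht)).mp h1
      have h3 : h (finv s) < h (hinv t) := (hhm.lt_iff_lt (hfinvmaps hs) (hhinvmaps ht)).mpr h2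
      rwa [hhi t ht] at h3
    · intro hlt
      have h1 : h (finv s) < h (hinv t) := by rwa [hhi t ht]
      have h2 : finv s < hinv t := (hhm.lt_iff_lt (hfinvmaps hs) (hhinvmaps ht)).mp h1
      have h3 : f (finv s) < f (hinv t) := (hfm.lt_iff_lt (hfinvmaps hs) (hhinvmaps ht)).mpr h2
      rwa [hfi s hs] at h3
  set A : Set (ℝ × ℝ) := (I ×ˢ I) ∩ {p : ℝ × ℝ | p.2 < G p.1} with hA
  have hAmeas : MeasurableSet A :=
    (hIm.prod hIm).inter (measurableSet_lt measurable_snd (hGmono.measurable.comp measurable_fst))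
  have hAeq : A = (I ×ˢ I) ∩ {p : ℝ × ℝ | H p.2 < p.1} := by
    ext ⟨t, s⟩
    simp only [hA, Set.mem_inter_iff, Set.mem_prod, Set.mem_setOf_eq, and_congr_right_iff]
    rintro ⟨ht, hs⟩
    exact hequiv t ht s hs
  -- first slicing
  have h1 : (volume : Measure (ℝ × ℝ)) A = ∫⁻ t in I, ENNReal.ofReal (G t + 1) := by
    rw [MeasureTheory.Measure.volume_eq_prod, Measure.prod_apply hAmeas]
    rw [← lintegral_indicator hIm]
    congr 1
    funext t
    by_cases ht : t ∈ I
    · have hpre : Prod.mk t ⁻¹' A = Set.Ico (-1) (G t) := by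
        ext s
        simp only [hA, Set.mem_preimage, Set.mem_inter_iff, Set.mem_prod, Set.mem_setOf_eq,
          Set.mem_Ico]
        constructor
        · rintro ⟨⟨_, hs⟩, hlt⟩; exact ⟨hs.1, hlt⟩
        · rintro ⟨hs1, hlt⟩
          exact ⟨⟨ht, hs1, le_trans hlt.le (hGmem t).2⟩, hlt⟩
      rw [hpre, Real.volume_Ico, Set.indicator_of_mem ht]
      rw [sub_neg_eq_add]
    · have hpre : Prod.mk t ⁻¹' A = ∅ := by
        ext s
        simp only [hA, Set.mem_preimage, Set.mem_inter_iff, Set.mem_prod, Set.mem_setOf_eq,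
          Set.mem_empty_iff_false, iff_false]
        rintro ⟨⟨ht', _⟩, _⟩; exact ht ht'
      rw [hpre, Set.indicator_of_notMem ht]
      simp
  -- second slicing
  have h2 : (volume : Measure (ℝ × ℝ)) A = ∫⁻ s in I, ENNReal.ofReal (1 - H s) := by
    rw [MeasureTheory.Measure.volume_eq_prod, Measure.prod_apply_symm hAmeas]
    rw [← lintegral_indicator hIm]
    congr 1
    funext s
    by_cases hs : s ∈ I
    · have hpre : (fun t => (t, s)) ⁻¹' A = Set.Ioc (H s) 1 := by
        rw [hAeq]
        ext t
        simp only [Set.mem_preimage, Set.mem_inter_iff, Set.mem_prod, Set.mem_setOf_eq,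
          Set.mem_Ioc]
        constructor
        · rintro ⟨⟨ht, _⟩, hlt⟩; exact ⟨hlt, ht.2⟩
        · rintro ⟨hlt, ht1⟩
          exact ⟨⟨⟨le_trans (hHmem s).1 hlt.le, ht1⟩, hs⟩, hlt⟩
      rw [hpre, Real.volume_Ioc, Set.indicator_of_mem hs]
    · have hpre : (fun t => (t, s)) ⁻¹' A = ∅ := by
        ext t
        simp only [hA, Set.mem_preimage, Set.mem_inter_iff, Set.mem_prod, Set.mem_setOf_eq,
          Set.mem_empty_iff_false, iff_false]
        rintro ⟨⟨_, hs'⟩, _⟩; exact hs hs'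
      rw [hpre, Set.indicator_of_notMem hs]
      simp
  -- integrability
  have hGint : IntegrableOn G I := (hGmono.monotoneOn I).integrableOn_isCompact isCompact_Icc
  have hHint : IntegrableOn H I := (hHmono.monotoneOn I).integrableOn_isCompact isCompact_Icc
  have hconst : IntegrableOn (fun _ : ℝ => (1:ℝ)) I := by
    rw [integrableOn_const_iff]
    exact Or.inr (by rw [hI, Real.volume_Icc]; norm_num)
  have e1 : ENNReal.ofReal (∫ t in I, (G t + 1)) = ∫⁻ t in I, ENNReal.ofReal (G t + 1) := by
    apply ofReal_integral_eq_lintegral_ofReal (hGint.add hconst)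
    filter_upwards with t
    have := (hGmem t).1
    show (0:ℝ) ≤ G t + 1
    linarith
  have e2 : ENNReal.ofReal (∫ s in I, (1 - H s)) = ∫⁻ s in I, ENNReal.ofReal (1 - H s) := by
    apply ofReal_integral_eq_lintegral_ofReal (hconst.sub hHint)
    filter_upwards with s
    have := (hHmem s).2
    show (0:ℝ) ≤ 1 - H s
    linarith
  have heq : ∫ t in I, (G t + 1) = ∫ s in I, (1 - H s) := by
    have h3 : ENNReal.ofReal (∫ t in I, (G t + 1)) = ENNReal.ofReal (∫ s in I, (1 - H s)) := by
      rw [e1, e2, ← h1, ← h2]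
    have n1 : 0 ≤ ∫ t in I, (G t + 1) :=
      setIntegral_nonneg hIm fun t _ => by have := (hGmem t).1; linarith
    have n2 : 0 ≤ ∫ s in I, (1 - H s) :=
      setIntegral_nonneg hIm fun s _ => by have := (hHmem s).2; linarith
    exact (ENNReal.ofReal_eq_ofReal_iff n1 n2).mp h3
  have hvol : (volume I).toReal = 2 := by
    rw [hI, Real.volume_Icc]; norm_num
  have hsplit1 : ∫ t in I, (G t + 1) = (∫ t in I, G t) + 2 := by
    rw [integral_add hGint hconst]
    simp [measureReal_def, hvol]
  have hsplit2 : ∫ s in I, (1 - H s) = 2 - ∫ s in I, H s := by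
    rw [integral_sub hconst hHint]
    simp [measureReal_def, hvol]
  have hfinal : ∫ t in I, G t = - ∫ s in I, H s := by
    rw [hsplit1, hsplit2] at heq; linarith
  have c1 : ∫ t in I, f (hinv t) = ∫ t in I, G t :=
    setIntegral_congr_fun hIm fun t ht => by rw [hG]; simp [clampI_eq ht]
  have c2 : ∫ s in I, h (finv s) = ∫ s in I, H s :=
    setIntegral_congr_fun hIm fun s hs => by rw [hH]; simp [clampI_eq hs]
  rw [c1, c2, hfinal]

/-- Q(f,g) = ∫_{-1}^1 f(g⁻¹) is affine in each variable: for x ∈ [0,1],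
Q(x f₁ + (1-x) f₂, g) = x Q(f₁,g) + (1-x) Q(f₂,g) and
Q(f, x g₁ + (1-x) g₂) = x Q(f,g₁) + (1-x) Q(f,g₂). -/
theorem stmt7 (f f₁ f₂ g g₁ g₂ ginv g₁inv g₂inv gxinv : ℝ → ℝ) (x : ℝ)
    (hx : x ∈ Set.Icc (0:ℝ) 1)
    (hf : IsHPM f) (hf₁ : IsHPM f₁) (hf₂ : IsHPM f₂)
    (hg : IsHPM g) (hg₁ : IsHPM g₁) (hg₂ : IsHPM g₂)
    (hginv : ∀ t ∈ Set.Icc (-1:ℝ) 1, ginv (g t) = t ∧ g (ginv t) = t)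
    (hg₁inv : ∀ t ∈ Set.Icc (-1:ℝ) 1, g₁inv (g₁ t) = t ∧ g₁ (g₁inv t) = t)
    (hg₂inv : ∀ t ∈ Set.Icc (-1:ℝ) 1, g₂inv (g₂ t) = t ∧ g₂ (g₂inv t) = t)
    (hgxinv : ∀ t ∈ Set.Icc (-1:ℝ) 1,
      gxinv (x * g₁ t + (1 - x) * g₂ t) = t ∧
        x * g₁ (gxinv t) + (1 - x) * g₂ (gxinv t) = t)
    (hginvmaps : Set.MapsTo ginv (Set.Icc (-1) 1) (Set.Icc (-1) 1))
    (hg₁invmaps : Set.MapsTo g₁inv (Set.Icc (-1) 1) (Set.Icc (-1) 1))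
    (hg₂invmaps : Set.MapsTo g₂inv (Set.Icc (-1) 1) (Set.Icc (-1) 1))
    (hgxinvmaps : Set.MapsTo gxinv (Set.Icc (-1) 1) (Set.Icc (-1) 1)) :
    (∫ t in (-1:ℝ)..1, (x * f₁ (ginv t) + (1 - x) * f₂ (ginv t)))
        = x * (∫ t in (-1:ℝ)..1, f₁ (ginv t)) + (1 - x) * ∫ t in (-1:ℝ)..1, f₂ (ginv t) ∧
    (∫ t in (-1:ℝ)..1, f (gxinv t))
        = x * (∫ t in (-1:ℝ)..1, f (g₁inv t)) + (1 - x) * ∫ t in (-1:ℝ)..1, f (g₂inv t) := by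
  obtain ⟨hx0, hx1⟩ := hx
  obtain ⟨hfc, hfm, hfmaps, hfa, hfb⟩ := hf
  obtain ⟨-, hf₁m, hf₁maps, -, -⟩ := hf₁
  obtain ⟨-, hf₂m, hf₂maps, -, -⟩ := hf₂
  obtain ⟨-, hgm, hgmaps, -, -⟩ := hg
  obtain ⟨-, hg₁m, hg₁maps, -, -⟩ := hg₁
  obtain ⟨-, hg₂m, hg₂maps, -, -⟩ := hg₂
  have hIle : (-1:ℝ) ≤ 1 := by norm_num
  have conv : ∀ F : ℝ → ℝ, (∫ t in (-1:ℝ)..1, F t) = ∫ t in Set.Icc (-1:ℝ) 1, F t := by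
    intro F
    rw [intervalIntegral.integral_of_le hIle, ← integral_Icc_eq_integral_Ioc]
  have ginvmono : StrictMonoOn ginv (Set.Icc (-1:ℝ) 1) :=
    invStrictMono hgm hginvmaps (fun t ht => (hginv t ht).2)
  constructor
  · have m1 : MonotoneOn (fun t => f₁ (ginv t)) (Set.Icc (-1:ℝ) 1) := fun a ha b hb hab =>
      hf₁m.monotoneOn (hginvmaps ha) (hginvmaps hb) (ginvmono.monotoneOn ha hb hab)
    have m2 : MonotoneOn (fun t => f₂ (ginv t)) (Set.Icc (-1:ℝ) 1) := fun a ha b hb hab =>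
      hf₂m.monotoneOn (hginvmaps ha) (hginvmaps hb) (ginvmono.monotoneOn ha hb hab)
    have i1 : IntervalIntegrable (fun t => f₁ (ginv t)) volume (-1) 1 :=
      MonotoneOn.intervalIntegrable (by rwa [Set.uIcc_of_le hIle])
    have i2 : IntervalIntegrable (fun t => f₂ (ginv t)) volume (-1) 1 :=
      MonotoneOn.intervalIntegrable (by rwa [Set.uIcc_of_le hIle])
    rw [intervalIntegral.integral_add (i1.const_mul x) (i2.const_mul (1 - x)),
      intervalIntegral.integral_const_mul, intervalIntegral.integral_const_mul]
  · -- construct the inverse of f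
    have hfsurj : ∀ s ∈ Set.Icc (-1:ℝ) 1, ∃ u, u ∈ Set.Icc (-1:ℝ) 1 ∧ f u = s := by
      intro s hs
      have h := intermediate_value_Icc hIle hfc
      rw [hfa, hfb] at h
      obtain ⟨u, hu, hfu⟩ := h hs
      exact ⟨u, hu, hfu⟩
    classical
    set finv : ℝ → ℝ := fun s => if hs : s ∈ Set.Icc (-1:ℝ) 1 then (hfsurj s hs).choose else s
      with hfinvdef
    have hfinvmaps : Set.MapsTo finv (Set.Icc (-1:ℝ) 1) (Set.Icc (-1:ℝ) 1) := fun s hs => by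
      rw [hfinvdef]; simp only [hs, dif_pos]; exact ((hfsurj s hs).choose_spec).1
    have hfi : ∀ s ∈ Set.Icc (-1:ℝ) 1, f (finv s) = s := fun s hs => by
      rw [hfinvdef]; simp only [hs, dif_pos]; exact ((hfsurj s hs).choose_spec).2
    set gx : ℝ → ℝ := fun t => x * g₁ t + (1 - x) * g₂ t with hgxdef
    have hgxm : StrictMonoOn gx (Set.Icc (-1:ℝ) 1) := by
      intro a ha b hb hab
      have h1 := hg₁m ha hb hab
      have h2 := hg₂m ha hb hab
      show x * g₁ a + (1 - x) * g₂ a < x * g₁ b + (1 - x) * g₂ b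
      rcases eq_or_lt_of_le hx0 with h0 | h0
      · rw [← h0]; ring_nf; linarith
      · have e1 := mul_lt_mul_of_pos_left h1 h0
        have e2 := mul_le_mul_of_nonneg_left h2.le (by linarith : (0:ℝ) ≤ 1 - x)
        linarith
    have hgxmaps : Set.MapsTo gx (Set.Icc (-1:ℝ) 1) (Set.Icc (-1:ℝ) 1) := by
      intro t ht
      have h1 := hg₁maps ht
      have h2 := hg₂maps ht
      simp only [hgxdef, Set.mem_Icc] at h1 h2 ⊢
      constructor
      · nlinarith [mul_nonneg hx0 (by linarith [h1.1] : (0:ℝ) ≤ g₁ t + 1),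
          mul_nonneg (by linarith : (0:ℝ) ≤ 1 - x) (by linarith [h2.1] : (0:ℝ) ≤ g₂ t + 1)]
      · nlinarith [mul_nonneg hx0 (by linarith [h1.2] : (0:ℝ) ≤ 1 - g₁ t),
          mul_nonneg (by linarith : (0:ℝ) ≤ 1 - x) (by linarith [h2.2] : (0:ℝ) ≤ 1 - g₂ t)]
    have k0 : ∫ t in Set.Icc (-1:ℝ) 1, f (gxinv t) = - ∫ s in Set.Icc (-1:ℝ) 1, gx (finv s) :=
      key_identity f gx finv gxinv hfm hfmaps hgxm hgxmaps hfi
        (fun t ht => (hgxinv t ht).2) hfinvmaps hgxinvmaps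
    have k1 : ∫ t in Set.Icc (-1:ℝ) 1, f (g₁inv t) = - ∫ s in Set.Icc (-1:ℝ) 1, g₁ (finv s) :=
      key_identity f g₁ finv g₁inv hfm hfmaps hg₁m hg₁maps hfi
        (fun t ht => (hg₁inv t ht).2) hfinvmaps hg₁invmaps
    have k2 : ∫ t in Set.Icc (-1:ℝ) 1, f (g₂inv t) = - ∫ s in Set.Icc (-1:ℝ) 1, g₂ (finv s) :=
      key_identity f g₂ finv g₂inv hfm hfmaps hg₂m hg₂maps hfi
        (fun t ht => (hg₂inv t ht).2) hfinvmaps hg₂invmaps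
    have finvmono : StrictMonoOn finv (Set.Icc (-1:ℝ) 1) := invStrictMono hfm hfinvmaps hfi
    have ia : IntegrableOn (fun s => g₁ (finv s)) (Set.Icc (-1:ℝ) 1) :=
      MonotoneOn.integrableOn_isCompact isCompact_Icc
        (fun a ha b hb hab => hg₁m.monotoneOn (hfinvmaps ha) (hfinvmaps hb)
          (finvmono.monotoneOn ha hb hab))
    have ib : IntegrableOn (fun s => g₂ (finv s)) (Set.Icc (-1:ℝ) 1) :=
      MonotoneOn.integrableOn_isCompact isCompact_Icc
        (fun a ha b hb hab => hg₂m.monotoneOn (hfinvmaps ha) (hfinvmaps hb)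
          (finvmono.monotoneOn ha hb hab))
    have lin : ∫ s in Set.Icc (-1:ℝ) 1, gx (finv s)
        = x * (∫ s in Set.Icc (-1:ℝ) 1, g₁ (finv s))
          + (1 - x) * ∫ s in Set.Icc (-1:ℝ) 1, g₂ (finv s) := by
      have e : ∫ s in Set.Icc (-1:ℝ) 1, gx (finv s)
          = ∫ s in Set.Icc (-1:ℝ) 1, (x * g₁ (finv s) + (1 - x) * g₂ (finv s)) := rfl
      rw [e, integral_add (ia.const_mul x) (ib.const_mul (1 - x)),
        integral_const_mul, integral_const_mul]
    rw [conv, conv, conv, k0, k1, k2, lin]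
    ring
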